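/- Let λ be a complex number with 0 < |λ| < 1. A nonzero bounded linear operator X on the Hardy space H²(𝔻) satisfies BX = λXB (i.e., X is an extended λ-eigenoperator of the backward shift B) if and only if there exists φ ∈ H²(𝔻), φ ≠ 0, such that the adjoint of X is X* = M_{φ̄} R_{conj(λ)}, i.e., X = R_λ φ(B) where φ(B) = (M_{φ̄})* is the (possibly unbounded) coanalytic Toeplitz operator with symbol φ. -/

import Mathlib

open Complex Metric Filter Topology ComplexConjugate

noncomputable section

/-- The Hardy space `H²(𝔻)`, modeled via Taylor coefficients as the sequence space `ℓ²`:
an analytic function `f(z) = Σ aₙ zⁿ` on the unit disk with `Σ |aₙ|² < ∞` is identified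
with its coefficient sequence. -/
abbrev H2 := lp (fun _ : ℕ => ℂ) 2

/-- The analytic function on the unit disk represented by an element of `H²`. -/
def H2.toFun (f : H2) (z : ℂ) : ℂ := ∑' n : ℕ, f n * z ^ n

/-- `B` is the backward shift `(Bf)(z) = (f(z) - f(0))/z`, i.e. on Taylor coefficients
`(Bf)ₙ = f_{n+1}`. -/
def IsBackwardShift (B : H2 →L[ℂ] H2) : Prop :=
  ∀ (f : H2) (n : ℕ), B f n = f (n + 1)

/-- `R` is the dilation operator `(R_λ f)(z) = f(λ z)`, i.e. on Taylor coefficients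
`(R_λ f)ₙ = λⁿ fₙ`. -/
def IsDilation (lam : ℂ) (R : H2 →L[ℂ] H2) : Prop :=
  ∀ (f : H2) (n : ℕ), R f n = lam ^ n * f n

/-- `φ ∈ H^∞(𝔻)`: a bounded analytic function on the open unit disk. -/
def InHinf (φ : ℂ → ℂ) : Prop :=
  DifferentiableOn ℂ φ (ball (0:ℂ) 1) ∧ ∃ M : ℝ, ∀ z ∈ ball (0:ℂ) 1, ‖φ z‖ ≤ M

/-- `Φ = φ(B)`, the coanalytic Toeplitz operator `M_{φ̄}⋆` with symbol `φ`: there is a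
Taylor coefficient sequence `c` for `φ` on the disk such that
`(Φ f)ₙ = Σ_k c_k f_{n+k}` (equivalently `Φ = Σ_k c_k B^k`). -/
def IsCoToeplitz (φ : ℂ → ℂ) (Φ : H2 →L[ℂ] H2) : Prop :=
  ∃ c : ℕ → ℂ,
    (∀ z ∈ ball (0:ℂ) 1, HasSum (fun k => c k * z ^ k) (φ z)) ∧
    (∀ (f : H2) (n : ℕ), HasSum (fun k => c k * f (n + k)) (Φ f n))

/-- An operator `T` is hypercyclic if some vector has dense orbit `{Tⁿ x : n ∈ ℕ}`. -/
def Hypercyclic (T : H2 →L[ℂ] H2) : Prop :=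
  ∃ x : H2, Dense (Set.range fun n : ℕ => (T ^ n) x)

/-- An operator `T` is supercyclic if for some vector `x` the set of scalar multiples
`{μ Tⁿ x : μ ∈ ℂ, n ∈ ℕ}` is dense. -/
def Supercyclic (T : H2 →L[ℂ] H2) : Prop :=
  ∃ x : H2, Dense {y : H2 | ∃ (μ : ℂ) (n : ℕ), y = μ • (T ^ n) x}

/-- `φ̄(z) = conj (φ (conj z))`. -/
def conjSymb (φ : ℂ → ℂ) (z : ℂ) : ℂ := conj (φ (conj z))

/-- `λ` is an irrational rotation: `|λ| = 1` and `λ` is not a root of unity. -/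
def IsIrrationalRotation (lam : ℂ) : Prop :=
  ‖lam‖ = 1 ∧ ∀ n : ℕ, 0 < n → lam ^ n ≠ 1

/-- `Ψ_n(z) = φ̄(z)·φ̄(αz)⋯φ̄(α^{n-1}z)` where `α = conj λ`. -/
def psiProd (φ : ℂ → ℂ) (lam : ℂ) (n : ℕ) (z : ℂ) : ℂ :=
  ∏ j ∈ Finset.range n, conjSymb φ ((conj lam) ^ j * z)

/-- `Ω_n(z) = φ̄(ωz)·φ̄(ω²z)⋯φ̄(ωⁿz)` where `ω = 1/conj λ`. -/
def omegaProd (φ : ℂ → ℂ) (lam : ℂ) (n : ℕ) (z : ℂ) : ℂ :=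
  ∏ j ∈ Finset.range n, conjSymb φ (((conj lam)⁻¹) ^ (j + 1) * z)

lemma memℓp_geom {a : ℂ} (ha : ‖a‖ < 1) : Memℓp (fun n : ℕ => (conj a) ^ n) 2 := by
  apply memℓp_gen
  have hs : Summable fun n : ℕ => (‖a‖ ^ 2) ^ n :=
    summable_geometric_of_lt_one (by positivity) (by nlinarith [norm_nonneg a])
  refine hs.congr fun n => ?_
  rw [norm_pow]
  simp only [RCLike.norm_conj]
  rw [ENNReal.toReal_ofNat, Real.rpow_two]
  ring

/-- The reproducing kernel `k_a(z) = 1/(1 - conj(a) z) = Σ (conj a)ⁿ zⁿ` of `H²(𝔻)`,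
as an element of `H²` (junk value `0` if `a` is outside the unit disk). -/
def kernelVec (a : ℂ) : H2 :=
  if ha : ‖a‖ < 1 then ⟨fun n => (conj a) ^ n, memℓp_geom ha⟩ else 0

/-- `T` satisfies the Hypercyclicity Criterion for the sequence `(n_k)`. -/
def SatisfiesHCCriterion (T : H2 →L[ℂ] H2) (nk : ℕ → ℕ) : Prop :=
  ∃ (X₀ Y₀ : Set H2) (S : ℕ → H2 → H2),
    Dense X₀ ∧ Dense Y₀ ∧
    (∀ x ∈ X₀, Tendsto (fun k => (T ^ nk k) x) atTop (𝓝 0)) ∧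
    (∀ y ∈ Y₀, Tendsto (fun k => S k y) atTop (𝓝 0)) ∧
    (∀ y ∈ Y₀, Tendsto (fun k => (T ^ nk k) (S k y)) atTop (𝓝 y))

/-- A family `F` of functions is normal at `z₀`: on some open neighborhood of `z₀`,
every (sub)sequence of the family has a locally uniformly convergent subsequence. -/
def NormalAt (F : ℕ → ℂ → ℂ) (z₀ : ℂ) : Prop :=
  ∃ U : Set ℂ, IsOpen U ∧ z₀ ∈ U ∧
    ∀ g : ℕ → ℕ, StrictMono g →
      ∃ (h : ℕ → ℕ) (f : ℂ → ℂ), StrictMono h ∧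
        TendstoLocallyUniformlyOn (fun j => F (g (h j))) f atTop U

/-- The family `{F n : n ≥ 1}` is uniformly bounded on compact subsets of the unit disk. -/
def UnifBddOnCompacts (F : ℕ → ℂ → ℂ) : Prop :=
  ∀ K : Set ℂ, K ⊆ ball (0:ℂ) 1 → IsCompact K →
    ∃ M : ℝ, ∀ n : ℕ, 1 ≤ n → ∀ z ∈ K, ‖F n z‖ ≤ M



/-! ### Auxiliary lemmas for `stmt2` -/

section Stmt2Aux

open Finset

/-- Cauchy-product coefficient. -/
private def Qc (lam : ℂ) (d : ℕ → ℂ) (f : ℕ → ℂ) (m : ℕ) : ℂ :=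
  ∑ k ∈ Finset.range (m + 1), d k * ((conj lam) ^ (m - k) * f (m - k))

private lemma aux_coord_le (f : H2) (n : ℕ) : ‖f n‖ ≤ ‖f‖ :=
  lp.norm_apply_le_norm (by norm_num) f n

private lemma aux_summable {c : ℕ → ℂ} {C : ℝ} (hc : ∀ n, ‖c n‖ ≤ C) {z : ℂ}
    (hz : ‖z‖ < 1) : Summable fun n => ‖c n * z ^ n‖ := by
  have hgeo : Summable fun n : ℕ => C * ‖z‖ ^ n :=
    (summable_geometric_of_lt_one (norm_nonneg z) hz).mul_left C
  refine Summable.of_nonneg_of_le (fun n => norm_nonneg _) (fun n => ?_) hgeo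
  rw [norm_mul, norm_pow]
  exact mul_le_mul_of_nonneg_right (hc n) (by positivity)

private lemma aux_hasFPS {c : ℕ → ℂ} {C : ℝ} (hc : ∀ n, ‖c n‖ ≤ C) :
    HasFPowerSeriesAt (fun z => ∑' n, c n * z ^ n)
      (FormalMultilinearSeries.ofScalars ℂ c) 0 := by
  have hC0 : 0 ≤ C := le_trans (norm_nonneg _) (hc 0)
  have hrad : (1 : ENNReal) ≤ (FormalMultilinearSeries.ofScalars ℂ c).radius := by
    refine ENNReal.le_of_forall_nnreal_lt fun r hr => ?_
    refine FormalMultilinearSeries.le_radius_of_bound _ C fun n => ?_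
    have hr1 : (r : ℝ) ≤ 1 := by exact_mod_cast hr.le
    have h1 : ‖FormalMultilinearSeries.ofScalars ℂ c n‖ = ‖c n‖ :=
      FormalMultilinearSeries.ofScalars_norm ℂ c n
    rw [h1]
    calc ‖c n‖ * (r : ℝ) ^ n ≤ C * 1 ^ n := by
          refine mul_le_mul (hc n) (pow_le_pow_left₀ (by positivity) hr1 n)
            (by positivity) hC0
      _ = C := by simp
  have hpos : (0 : ENNReal) < (FormalMultilinearSeries.ofScalars ℂ c).radius :=
    lt_of_lt_of_le (by norm_num) hrad
  have hball := (FormalMultilinearSeries.ofScalars ℂ c).hasFPowerSeriesOnBall hpos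
  have hsum : (FormalMultilinearSeries.ofScalars ℂ c).sum = fun z => ∑' n, c n * z ^ n := by
    funext z
    refine tsum_congr fun n => ?_
    rw [FormalMultilinearSeries.ofScalars_apply_eq, smul_eq_mul]
  exact (hsum ▸ hball).hasFPowerSeriesAt

private lemma aux_tsum_unique {a b : ℕ → ℂ} {Ca Cb : ℝ} (ha : ∀ n, ‖a n‖ ≤ Ca)
    (hb : ∀ n, ‖b n‖ ≤ Cb)
    (h : ∀ z ∈ ball (0 : ℂ) 1, (∑' n, a n * z ^ n) = ∑' n, b n * z ^ n) : a = b := by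
  have hpa := aux_hasFPS ha
  have hqb := aux_hasFPS hb
  have heq : (fun z => ∑' n, b n * z ^ n) =ᶠ[nhds (0 : ℂ)] fun z => ∑' n, a n * z ^ n := by
    filter_upwards [isOpen_ball.mem_nhds (by simp : (0:ℂ) ∈ ball (0:ℂ) 1)] with z hz
    exact (h z hz).symm
  have hqa : HasFPowerSeriesAt (fun z => ∑' n, a n * z ^ n)
      (FormalMultilinearSeries.ofScalars ℂ b) 0 := hqb.congr heq
  have := hpa.eq_formalMultilinearSeries hqa
  exact FormalMultilinearSeries.ofScalars_series_injective ℂ ℂ this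

private lemma aux_cauchy {a b : ℕ → ℂ} {Ca Cb : ℝ} (ha : ∀ n, ‖a n‖ ≤ Ca)
    (hb : ∀ n, ‖b n‖ ≤ Cb) {z : ℂ} (hz : ‖z‖ < 1) :
    (∑' n, a n * z ^ n) * (∑' n, b n * z ^ n)
      = ∑' n, (∑ k ∈ Finset.range (n + 1), a k * b (n - k)) * z ^ n := by
  rw [tsum_mul_tsum_eq_tsum_sum_range_of_summable_norm (aux_summable ha hz)
    (aux_summable hb hz)]
  refine tsum_congr fun n => ?_
  rw [Finset.sum_mul]
  refine Finset.sum_congr rfl fun k hk => ?_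
  have hkn : k ≤ n := Nat.lt_succ_iff.mp (Finset.mem_range.mp hk)
  have : z ^ k * z ^ (n - k) = z ^ n := by
    rw [← pow_add, Nat.add_sub_cancel' hkn]
  calc a k * z ^ k * (b (n - k) * z ^ (n - k))
      = a k * b (n - k) * (z ^ k * z ^ (n - k)) := by ring
    _ = a k * b (n - k) * z ^ n := by rw [this]

private lemma aux_rhs (lam : ℂ) (hlam1 : ‖lam‖ < 1) {d : ℕ → ℂ} {Cd : ℝ}
    (hd : ∀ k, ‖d k‖ ≤ Cd) (f : H2) {z : ℂ} (hz : ‖z‖ < 1) :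
    (∑' k, d k * z ^ k) * H2.toFun f (conj lam * z)
      = ∑' m, Qc lam d (fun n => f n) m * z ^ m := by
  have hα : ‖(conj lam : ℂ)‖ < 1 := by rwa [RCLike.norm_conj]
  have hb : ∀ k : ℕ, ‖(conj lam) ^ k * f k‖ ≤ ‖f‖ := by
    intro k
    rw [norm_mul, norm_pow]
    calc ‖conj lam‖ ^ k * ‖f k‖ ≤ 1 ^ k * ‖f‖ := by
          exact mul_le_mul (pow_le_pow_left₀ (norm_nonneg _) hα.le k)
            (aux_coord_le f k) (norm_nonneg _) (by positivity)
      _ = ‖f‖ := by simp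
  have h2 : H2.toFun f (conj lam * z) = ∑' k, ((conj lam) ^ k * f k) * z ^ k := by
    refine tsum_congr fun k => ?_
    rw [mul_pow]; ring
  rw [h2, aux_cauchy hd hb hz]
  rfl

private lemma aux_conjSymb (φ : H2) (z : ℂ) :
    conjSymb (H2.toFun φ) z = ∑' k, conj (φ k) * z ^ k := by
  unfold conjSymb H2.toFun
  rw [starRingEnd_apply, tsum_star]
  refine tsum_congr fun k => ?_
  simp only [star_mul', star_pow, starRingEnd_apply, star_star]

private lemma aux_Qc_bound (lam : ℂ) (hlam1 : ‖lam‖ < 1) {d : ℕ → ℂ} {Cd : ℝ}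
    (hd : ∀ k, ‖d k‖ ≤ Cd) (f : H2) (m : ℕ) :
    ‖Qc lam d (fun n => f n) m‖ ≤ Cd * ‖f‖ * (1 - ‖lam‖)⁻¹ := by
  have hCd0 : 0 ≤ Cd := le_trans (norm_nonneg _) (hd 0)
  have hα : ‖(conj lam : ℂ)‖ = ‖lam‖ := RCLike.norm_conj _
  calc ‖Qc lam d (fun n => f n) m‖
      ≤ ∑ k ∈ Finset.range (m + 1), ‖d k * ((conj lam) ^ (m - k) * f (m - k))‖ :=
        norm_sum_le _ _
    _ ≤ ∑ k ∈ Finset.range (m + 1), Cd * ‖f‖ * ‖lam‖ ^ (m - k) := by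
        refine Finset.sum_le_sum fun k _ => ?_
        rw [norm_mul, norm_mul, norm_pow, hα]
        calc ‖d k‖ * (‖lam‖ ^ (m - k) * ‖f (m - k)‖)
            ≤ Cd * (‖lam‖ ^ (m - k) * ‖f‖) := by
              refine mul_le_mul (hd k) (mul_le_mul_of_nonneg_left
                (aux_coord_le f (m - k)) (by positivity)) (by positivity) hCd0
          _ = Cd * ‖f‖ * ‖lam‖ ^ (m - k) := by ring
    _ = Cd * ‖f‖ * ∑ k ∈ Finset.range (m + 1), ‖lam‖ ^ (m - k) := by
        rw [Finset.mul_sum]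
    _ ≤ Cd * ‖f‖ * (1 - ‖lam‖)⁻¹ := by
        refine mul_le_mul_of_nonneg_left ?_ (by positivity)
        have hre : ∑ k ∈ Finset.range (m + 1), ‖lam‖ ^ (m - k)
            = ∑ k ∈ Finset.range (m + 1), ‖lam‖ ^ k := by
          have := Finset.sum_range_reflect (fun k => ‖lam‖ ^ k) (m + 1)
          simpa using this
        rw [hre, ← tsum_geometric_of_lt_one (norm_nonneg lam) hlam1]
        exact Summable.sum_le_tsum (Finset.range (m + 1)) (fun b _ => by positivity)
          (summable_geometric_of_lt_one (norm_nonneg lam) hlam1)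

private lemma aux_single_coord (k n : ℕ) (c : ℂ) :
    (lp.single 2 k c : H2) n = if n = k then c else 0 := by
  rw [lp.single_apply]
  split_ifs with h
  · subst h; simp
  · simp [Pi.single_apply, h]

private lemma aux_coord_eq_inner (f : H2) (n : ℕ) :
    f n = inner (𝕜 := ℂ) (lp.single 2 n (1 : ℂ) : H2) f := by
  rw [lp.inner_single_left, RCLike.inner_apply, map_one, mul_one]

private lemma aux_adjoint_shift {B : H2 →L[ℂ] H2} (hB : IsBackwardShift B) :
    (∀ f : H2, ContinuousLinearMap.adjoint B f 0 = 0) ∧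
      ∀ (f : H2) (n : ℕ), ContinuousLinearMap.adjoint B f (n + 1) = f n := by
  have hB0 : B (lp.single 2 0 (1 : ℂ)) = 0 := by
    apply lp.ext; funext m
    rw [hB, aux_single_coord]
    simp
  have hBs : ∀ n : ℕ, B (lp.single 2 (n + 1) (1 : ℂ)) = lp.single 2 n 1 := by
    intro n; apply lp.ext; funext m
    rw [hB, aux_single_coord, aux_single_coord]
    simp
  constructor
  · intro f
    rw [aux_coord_eq_inner (ContinuousLinearMap.adjoint B f) 0,
      ContinuousLinearMap.adjoint_inner_right, hB0, inner_zero_left]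
  · intro f n
    rw [aux_coord_eq_inner (ContinuousLinearMap.adjoint B f) (n + 1),
      ContinuousLinearMap.adjoint_inner_right, hBs, ← aux_coord_eq_inner]

private lemma aux_coord_hasSum (Y : H2 →L[ℂ] H2) (f : H2) (m : ℕ) :
    HasSum (fun k => f k * (Y (lp.single 2 k 1)) m) ((Y f) m) := by
  classical
  have h1 : HasSum (fun k : ℕ => (lp.single 2 k (f k) : H2)) f :=
    lp.hasSum_single (by norm_num) f
  have h2 := h1.mapL Y
  have h3 := h2.mapL (innerSL ℂ (lp.single 2 m (1 : ℂ) : H2))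
  have key : (fun k => (innerSL ℂ (lp.single 2 m (1 : ℂ) : H2))
      (Y (lp.single 2 k (f k) : H2))) = fun k => f k * (Y (lp.single 2 k 1)) m := by
    funext k
    have hsm : (lp.single 2 k (f k) : H2) = f k • (lp.single 2 k (1 : ℂ) : H2) := by
      rw [← lp.single_smul, smul_eq_mul, mul_one]
    rw [hsm, map_smul, map_smul, innerSL_apply_apply, ← aux_coord_eq_inner, smul_eq_mul]
  rw [key] at h3
  have hYfm : (innerSL ℂ (lp.single 2 m (1 : ℂ) : H2)) (Y f) = (Y f) m := by
    rw [innerSL_apply_apply, ← aux_coord_eq_inner]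
  rwa [hYfm] at h3

private lemma aux_forward_coeff {lam : ℂ} {S Y : H2 →L[ℂ] H2}
    (hS0 : ∀ f : H2, S f 0 = 0) (hSn : ∀ (f : H2) (n : ℕ), S f (n + 1) = f n)
    (hYS : ∀ f : H2, Y (S f) = conj lam • S (Y f)) (f : H2) (m : ℕ) :
    Y f m = Qc lam (fun n => Y (lp.single 2 0 1) n) (fun n => f n) m := by
  set d : H2 := Y (lp.single 2 0 1) with hd
  have hsingle : ∀ k m : ℕ, Y (lp.single 2 k 1) m
      = if k ≤ m then (conj lam) ^ k * d (m - k) else 0 := by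
    intro k
    induction k with
    | zero => intro m; simp [hd]
    | succ k ih =>
      intro m
      have hSe : S (lp.single 2 k 1 : H2) = lp.single 2 (k + 1) 1 := by
        apply lp.ext; funext n
        cases n with
        | zero => rw [hS0, aux_single_coord]; simp
        | succ n => rw [hSn, aux_single_coord, aux_single_coord]; simp
      have h1 : Y (lp.single 2 (k + 1) 1) = conj lam • S (Y (lp.single 2 k 1)) := by
        rw [← hSe, hYS]
      cases m with
      | zero =>
        rw [h1]
        have : (conj lam • S (Y (lp.single 2 k 1)) : H2) 0
            = conj lam * (S (Y (lp.single 2 k 1))) 0 := by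
          rw [lp.coeFn_smul, Pi.smul_apply, smul_eq_mul]
        rw [this, hS0, mul_zero, if_neg (by omega)]
      | succ m =>
        rw [h1]
        have h2 : (conj lam • S (Y (lp.single 2 k 1)) : H2) (m + 1)
            = conj lam * (Y (lp.single 2 k 1)) m := by
          rw [lp.coeFn_smul, Pi.smul_apply, smul_eq_mul, hSn]
        rw [h2, ih m]
        by_cases hk : k ≤ m
        · rw [if_pos hk, if_pos (by omega)]
          have : m + 1 - (k + 1) = m - k := by omega
          rw [this, pow_succ]
          ring
        · rw [if_neg hk, if_neg (by omega), mul_zero]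
  have h := aux_coord_hasSum Y f m
  have hfun : (fun k => f k * (Y (lp.single 2 k 1)) m)
      = fun k => if k ≤ m then f k * ((conj lam) ^ k * d (m - k)) else 0 := by
    funext k
    rw [hsingle k m, mul_ite, mul_zero]
  rw [hfun] at h
  have h3 : HasSum (fun k => if k ≤ m then f k * ((conj lam) ^ k * d (m - k)) else 0)
      (∑ k ∈ Finset.range (m + 1),
        if k ≤ m then f k * ((conj lam) ^ k * d (m - k)) else 0) := by
    refine hasSum_sum_of_ne_finset_zero fun b hb => ?_
    rw [if_neg]
    simpa using Finset.mem_range.not.mp hb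
  rw [h.unique h3]
  unfold Qc
  rw [← Finset.sum_range_reflect (fun k =>
    (fun n => d n) k * ((conj lam) ^ (m - k) * f (m - k))) (m + 1)]
  refine Finset.sum_congr rfl fun k hk => ?_
  have hkm : k ≤ m := Nat.lt_succ_iff.mp (Finset.mem_range.mp hk)
  rw [if_pos hkm]
  have e1 : m + 1 - 1 - k = m - k := by omega
  have e2 : m - (m - k) = k := Nat.sub_sub_self hkm
  rw [e1, e2]
  ring

private lemma aux_comm_of_coeff {lam : ℂ} {S Y : H2 →L[ℂ] H2} {d : ℕ → ℂ}
    (hS0 : ∀ f : H2, S f 0 = 0) (hSn : ∀ (f : H2) (n : ℕ), S f (n + 1) = f n)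
    (hcoeff : ∀ (f : H2) (m : ℕ), Y f m = Qc lam d (fun n => f n) m) :
    Y ∘L S = conj lam • (S ∘L Y) := by
  refine ContinuousLinearMap.ext fun f => ?_
  apply lp.ext; funext m
  have hL : (Y ∘L S) f m = Qc lam d (fun n => (S f) n) m := hcoeff (S f) m
  have hR : ((conj lam • (S ∘L Y)) f : H2) m = conj lam * (S (Y f)) m := by
    rw [ContinuousLinearMap.smul_apply, lp.coeFn_smul, Pi.smul_apply, smul_eq_mul]
    rfl
  rw [hL, hR]
  cases m with
  | zero =>
    rw [hS0]
    unfold Qc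
    simp [hS0]
  | succ m =>
    rw [hSn]
    unfold Qc
    rw [Finset.sum_range_succ]
    have hlast : d (m + 1) * ((conj lam) ^ (m + 1 - (m + 1)) * (S f) (m + 1 - (m + 1)))
        = 0 := by
      simp [hS0]
    rw [hlast, add_zero, hcoeff f m]
    unfold Qc
    rw [Finset.mul_sum]
    refine Finset.sum_congr rfl fun k hk => ?_
    have hkm : k ≤ m := Nat.lt_succ_iff.mp (Finset.mem_range.mp hk)
    have e1 : m + 1 - k = (m - k) + 1 := by omega
    rw [e1]
    beta_reduce
    rw [hSn, pow_succ]
    ring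

private lemma aux_adjoint_transfer (lam : ℂ) (B X : H2 →L[ℂ] H2) :
    B ∘L X = lam • (X ∘L B) ↔
      ContinuousLinearMap.adjoint X ∘L ContinuousLinearMap.adjoint B
        = conj lam •
          (ContinuousLinearMap.adjoint B ∘L ContinuousLinearMap.adjoint X) := by
  constructor
  · intro h
    calc ContinuousLinearMap.adjoint X ∘L ContinuousLinearMap.adjoint B
        = ContinuousLinearMap.adjoint (B ∘L X) :=
          (ContinuousLinearMap.adjoint_comp B X).symm
      _ = ContinuousLinearMap.adjoint (lam • (X ∘L B)) := by rw [h]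
      _ = conj lam • ContinuousLinearMap.adjoint (X ∘L B) := by
          rw [map_smulₛₗ]
      _ = conj lam •
          (ContinuousLinearMap.adjoint B ∘L ContinuousLinearMap.adjoint X) := by
          rw [ContinuousLinearMap.adjoint_comp]
  · intro h
    calc B ∘L X
        = ContinuousLinearMap.adjoint (ContinuousLinearMap.adjoint X ∘L
            ContinuousLinearMap.adjoint B) := by
          rw [ContinuousLinearMap.adjoint_comp, ContinuousLinearMap.adjoint_adjoint,
            ContinuousLinearMap.adjoint_adjoint]
      _ = ContinuousLinearMap.adjoint (conj lam •
            (ContinuousLinearMap.adjoint B ∘L ContinuousLinearMap.adjoint X)) := by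
          rw [h]
      _ = lam • (X ∘L B) := by
          rw [map_smulₛₗ, ContinuousLinearMap.adjoint_comp,
            ContinuousLinearMap.adjoint_adjoint, ContinuousLinearMap.adjoint_adjoint,
            Complex.conj_conj]

end Stmt2Aux

theorem stmt2 (lam : ℂ) (hlam0 : lam ≠ 0) (hlam1 : ‖lam‖ < 1)
    (B : H2 →L[ℂ] H2) (hB : IsBackwardShift B)
    (X : H2 →L[ℂ] H2) (hX : X ≠ 0) :
    B ∘L X = lam • (X ∘L B) ↔
      ∃ φ : H2, φ ≠ 0 ∧ ∀ f : H2, ∀ z ∈ ball (0:ℂ) 1,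
        H2.toFun (ContinuousLinearMap.adjoint X f) z
          = conjSymb (H2.toFun φ) z * H2.toFun f (conj lam * z) := by
  classical
  obtain ⟨hS0, hSn⟩ := aux_adjoint_shift hB
  set S := ContinuousLinearMap.adjoint B with hSdef
  set Y := ContinuousLinearMap.adjoint X with hYdef
  constructor
  · intro hcomm
    have h2 := (aux_adjoint_transfer lam B X).mp hcomm
    have hYS : ∀ f : H2, Y (S f) = conj lam • S (Y f) := by
      intro f
      calc Y (S f) = (Y ∘L S) f := rfl
        _ = (conj lam • (S ∘L Y)) f := by rw [← h2]
        _ = conj lam • S (Y f) := rfl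
    set d : H2 := Y (lp.single 2 0 1) with hddef
    have hcoeff : ∀ (f : H2) (m : ℕ), Y f m = Qc lam (fun n => d n) (fun n => f n) m :=
      fun f m => aux_forward_coeff hS0 hSn hYS f m
    have hstar : ∀ k : ℕ, conj ((star d : H2) k) = d k := by
      intro k
      have : (star d : H2) k = star (d k) := by rw [lp.coeFn_star]; rfl
      rw [this, starRingEnd_apply, star_star]
    refine ⟨star d, ?_, ?_⟩
    · intro h0
      have hd0 : d = 0 := by
        have := congrArg star h0
        rwa [star_star, star_zero] at this
      have hY0 : Y = 0 := by
        refine ContinuousLinearMap.ext fun f => ?_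
        apply lp.ext; funext m
        rw [ContinuousLinearMap.zero_apply]
        have hz : ((0 : H2) : ∀ _ : ℕ, ℂ) m = 0 := rfl
        rw [hz, hcoeff f m]
        unfold Qc
        refine Finset.sum_eq_zero fun k _ => ?_
        rw [hd0]
        simp
      apply hX
      have hXY : X = ContinuousLinearMap.adjoint Y := by
        rw [hYdef, ContinuousLinearMap.adjoint_adjoint]
      rw [hXY, hY0, map_zero]
    · intro f z hz
      rw [mem_ball_zero_iff] at hz
      have hbd : ∀ n, ‖d n‖ ≤ ‖d‖ := aux_coord_le d
      have h1 : H2.toFun (Y f) z = ∑' m, Qc lam (fun n => d n) (fun n => f n) m * z ^ m := by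
        unfold H2.toFun
        exact tsum_congr fun m => by rw [hcoeff f m]
      have hrhs := aux_rhs lam hlam1 (d := fun n => d n) (Cd := ‖d‖) hbd f hz
      have h4 : (∑' k, conj ((star d : H2) k) * z ^ k) = ∑' k, d k * z ^ k :=
        tsum_congr fun k => by rw [hstar k]
      rw [aux_conjSymb, h4, h1]
      exact hrhs.symm
  · rintro ⟨φ, hφ, hid⟩
    set d : ℕ → ℂ := fun k => conj (φ k) with hddef
    have hbd : ∀ n, ‖d n‖ ≤ ‖φ‖ := by
      intro n
      have : ‖d n‖ = ‖φ n‖ := RCLike.norm_conj _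
      rw [this]
      exact aux_coord_le φ n
    have hcoeff : ∀ (f : H2) (m : ℕ), Y f m = Qc lam d (fun n => f n) m := by
      intro f
      have hu : (fun m => Y f m) = fun m => Qc lam d (fun n => f n) m := by
        refine aux_tsum_unique (Ca := ‖Y f‖) (Cb := ‖φ‖ * ‖f‖ * (1 - ‖lam‖)⁻¹)
          (aux_coord_le (Y f)) (fun m => aux_Qc_bound lam hlam1 hbd f m) ?_
        intro z hzb
        have hz : ‖z‖ < 1 := mem_ball_zero_iff.mp hzb
        calc (∑' m, Y f m * z ^ m) = H2.toFun (Y f) z := rfl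
          _ = conjSymb (H2.toFun φ) z * H2.toFun f (conj lam * z) := hid f z hzb
          _ = (∑' k, d k * z ^ k) * H2.toFun f (conj lam * z) := by rw [aux_conjSymb]
          _ = ∑' m, Qc lam d (fun n => f n) m * z ^ m := aux_rhs lam hlam1 hbd f hz
      exact fun m => congrFun hu m
    have hops : Y ∘L S = conj lam • (S ∘L Y) := aux_comm_of_coeff hS0 hSn hcoeff
    exact (aux_adjoint_transfer lam B X).mpr hops
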